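/- Suppose the target training samples D_t = {Z_j^t}_{j=1}^m are i.i.d. from P_Z^t and the nonnegative loss ℓ(w,Z) is Γ(σ_s², c_s)-sub-Gamma under P_Z^t ⊗ P_W. Then for any learning algorithm P_{W|D_s,D_t}, |gen(P_{W|D_s,D_t},P_{D_s},P_{D_t})| ≤ sqrt(2σ_s² · I(W;D_t|D_s)/m) + c_s · I(W;D_t|D_s)/m. -/

import Mathlib

/-!
STATEMENT 6: If D_t is i.i.d. from P_Z^t and ℓ(w,Z) is Γ(σ_s², c_s)-sub-Gamma under
P_Z^t ⊗ P_W, then |gen| ≤ sqrt(2σ_s²·I(W;D_t|D_s)/m) + c_s·I(W;D_t|D_s)/m.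
-/

open scoped BigOperators
open Finset

noncomputable section

namespace TransferGibbs

def KL {α : Type*} [Fintype α] (p q : α → ℝ) : ℝ :=
  ∑ x, p x * Real.log (p x / q x)

def IsPMF {α : Type*} [Fintype α] (p : α → ℝ) : Prop := (∀ x, 0 ≤ p x) ∧ ∑ x, p x = 1

def empRisk {W Z : Type*} [Fintype Z] (ℓ : W → Z → ℝ) {k : ℕ} (d : Fin k → Z) (w : W) : ℝ :=
  (∑ j, ℓ w (d j)) / k

def popRisk {W Z : Type*} [Fintype Z] (ℓ : W → Z → ℝ) {m : ℕ}
    (pT : (Fin m → Z) → ℝ) (w : W) : ℝ :=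
  ∑ dt, pT dt * empRisk ℓ dt w

def iid {Z : Type*} [Fintype Z] (m : ℕ) (pZ : Z → ℝ) (dt : Fin m → Z) : ℝ :=
  ∏ j, pZ (dt j)

def gen {W Z : Type*} [Fintype W] [Fintype Z] (ℓ : W → Z → ℝ) {n m : ℕ}
    (pS : (Fin n → Z) → ℝ) (pT : (Fin m → Z) → ℝ)
    (P : (Fin n → Z) → (Fin m → Z) → W → ℝ) : ℝ :=
  ∑ ds, ∑ dt, ∑ w, pS ds * pT dt * P ds dt w * (popRisk ℓ pT w - empRisk ℓ dt w)

def condMI {W Z : Type*} [Fintype W] [Fintype Z] {n m : ℕ}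
    (pS : (Fin n → Z) → ℝ) (pT : (Fin m → Z) → ℝ)
    (P : (Fin n → Z) → (Fin m → Z) → W → ℝ) : ℝ :=
  ∑ ds, pS ds *
    KL (fun p : W × (Fin m → Z) => pT p.2 * P ds p.2 p.1)
       (fun p : W × (Fin m → Z) => (∑ dt, pT dt * P ds dt p.1) * pT p.2)

def margW {W Z : Type*} [Fintype W] [Fintype Z] {n m : ℕ}
    (pS : (Fin n → Z) → ℝ) (pT : (Fin m → Z) → ℝ)
    (P : (Fin n → Z) → (Fin m → Z) → W → ℝ) (w : W) : ℝ :=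
  ∑ ds, ∑ dt, pS ds * pT dt * P ds dt w

/-- Cumulant generating function of `ℓ(W,Z)` under `pW ⊗ pZ`. -/
def cgfLoss {W Z : Type*} [Fintype W] [Fintype Z]
    (ℓ : W → Z → ℝ) (pW : W → ℝ) (pZ : Z → ℝ) (lam : ℝ) : ℝ :=
  Real.log (∑ w, ∑ z, pW w * pZ z *
    Real.exp (lam * (ℓ w z - ∑ w', ∑ z', pW w' * pZ z' * ℓ w' z')))


/-- `ℓ(W,Z)` is `Γ(σ_s², c_s)`-sub-Gamma under `pW ⊗ pZ`. -/
def SubGammaLoss {W Z : Type*} [Fintype W] [Fintype Z]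
    (ℓ : W → Z → ℝ) (pW : W → ℝ) (pZ : Z → ℝ) (σs2 cs : ℝ) : Prop :=
  ∀ lam : ℝ, 0 < |lam| → |lam| < 1 / cs →
    cgfLoss ℓ pW pZ lam ≤ lam ^ 2 * σs2 / (2 * (1 - cs * |lam|))


set_option linter.unusedSectionVars false
set_option linter.unusedVariables false
set_option maxHeartbeats 2000000

/-- Donsker–Varadhan / Gibbs inequality, finite form. -/
lemma dv {α : Type*} [Fintype α] (p q f : α → ℝ)
    (hp : IsPMF p) (hq : ∀ x, 0 ≤ q x) (hac : ∀ x, q x = 0 → p x = 0) :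
    ∑ x, p x * f x ≤ (∑ x, p x * Real.log (p x / q x)) + Real.log (∑ x, q x * Real.exp (f x)) := by
  classical
  set T : Finset α := Finset.univ.filter (fun x => 0 < p x) with hT
  have hmemT : ∀ x, x ∈ T ↔ 0 < p x := by intro x; simp [hT]
  have hpT : ∀ x ∈ T, 0 < p x := fun x hx => (hmemT x).1 hx
  have hqT : ∀ x ∈ T, 0 < q x := by
    intro x hx
    rcases lt_or_eq_of_le (hq x) with h | h
    · exact h
    · exact absurd (hac x h.symm) (ne_of_gt (hpT x hx))
  have hzero : ∀ x ∉ T, p x = 0 := by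
    intro x hx
    rcases lt_or_eq_of_le (hp.1 x) with h | h
    · exact absurd ((hmemT x).2 h) hx
    · exact h.symm
  have hsumT : ∑ x ∈ T, p x = 1 := by
    rw [← hp.2]
    exact Finset.sum_subset (Finset.subset_univ T) (fun x _ hx => hzero x hx)
  -- Jensen: ∑_{x∈T} p x * log (a x) ≤ log (∑_{x∈T} p x * a x), a x := q x * exp (f x) / p x
  set a : α → ℝ := fun x => q x * Real.exp (f x) / p x with ha
  have hjensen : ∑ x ∈ T, p x * Real.log (a x) ≤ Real.log (∑ x ∈ T, p x * a x) := by
    have := (StrictConcaveOn.concaveOn strictConcaveOn_log_Ioi).le_map_sum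
      (t := T) (w := p) (p := a) (fun x hx => (hp.1 x)) hsumT
      (fun x hx => by
        have : 0 < a x := div_pos (mul_pos (hqT x hx) (Real.exp_pos _)) (hpT x hx)
        simpa using this)
    simpa [smul_eq_mul] using this
  have hpa : ∀ x ∈ T, p x * a x = q x * Real.exp (f x) := by
    intro x hx
    have hpx : p x ≠ 0 := (hpT x hx).ne'
    simp only [ha]
    field_simp
  have hsum1 : ∑ x ∈ T, p x * a x = ∑ x ∈ T, q x * Real.exp (f x) :=
    Finset.sum_congr rfl hpa
  have hposT : ∑ x ∈ T, q x * Real.exp (f x) > 0 := by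
    have hne : T.Nonempty := by
      by_contra h
      rw [Finset.not_nonempty_iff_eq_empty] at h
      rw [h] at hsumT; simp at hsumT
    obtain ⟨x, hx⟩ := hne
    refine Finset.sum_pos' (fun y hy => le_of_lt (mul_pos (hqT y hy) (Real.exp_pos _))) ⟨x, hx, mul_pos (hqT x hx) (Real.exp_pos _)⟩
  have hmono : Real.log (∑ x ∈ T, q x * Real.exp (f x)) ≤ Real.log (∑ x, q x * Real.exp (f x)) := by
    apply Real.log_le_log hposT
    exact Finset.sum_le_sum_of_subset_of_nonneg (Finset.subset_univ _)
      (fun x _ _ => mul_nonneg (hq x) (le_of_lt (Real.exp_pos _)))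
  -- pointwise on T : p x * log (a x) = p x * f x - p x * log (p x / q x)
  have hpt : ∀ x ∈ T, p x * Real.log (a x) = p x * f x - p x * Real.log (p x / q x) := by
    intro x hx
    have h1 : Real.log (a x) = Real.log (q x) + f x - Real.log (p x) := by
      rw [ha]
      rw [Real.log_div (mul_pos (hqT x hx) (Real.exp_pos _)).ne' (ne_of_gt (hpT x hx)), Real.log_mul (ne_of_gt (hqT x hx)) (ne_of_gt (Real.exp_pos _)), Real.log_exp]
    have h2 : Real.log (p x / q x) = Real.log (p x) - Real.log (q x) :=
      Real.log_div (ne_of_gt (hpT x hx)) (ne_of_gt (hqT x hx))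
    rw [h1, h2]; ring
  have key : ∑ x ∈ T, (p x * f x - p x * Real.log (p x / q x)) ≤ Real.log (∑ x, q x * Real.exp (f x)) := by
    calc ∑ x ∈ T, (p x * f x - p x * Real.log (p x / q x))
        = ∑ x ∈ T, p x * Real.log (a x) := by
          exact (Finset.sum_congr rfl (fun x hx => (hpt x hx).symm))
      _ ≤ Real.log (∑ x ∈ T, p x * a x) := hjensen
      _ = Real.log (∑ x ∈ T, q x * Real.exp (f x)) := by rw [hsum1]
      _ ≤ _ := hmono
  have e1 : ∑ x, p x * f x = ∑ x ∈ T, p x * f x := by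
    symm; exact Finset.sum_subset (Finset.subset_univ _) (fun x _ hx => by rw [hzero x hx]; ring)
  have e2 : ∑ x, p x * Real.log (p x / q x) = ∑ x ∈ T, p x * Real.log (p x / q x) := by
    symm; exact Finset.sum_subset (Finset.subset_univ _) (fun x _ hx => by rw [hzero x hx]; ring)
  rw [e1, e2]
  have := key
  rw [Finset.sum_sub_distrib] at this
  linarith

/-- Gibbs: KL against a subprobability is nonnegative. -/
lemma gibbs {α : Type*} [Fintype α] (p q : α → ℝ)
    (hp : IsPMF p) (hq : ∀ x, 0 ≤ q x) (hq1 : ∑ x, q x ≤ 1)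
    (hac : ∀ x, q x = 0 → p x = 0) :
    0 ≤ ∑ x, p x * Real.log (p x / q x) := by
  have h := dv p q (fun _ => 0) hp hq hac
  simp only [mul_zero, Real.exp_zero, mul_one, Finset.sum_const_zero] at h
  have hlog : Real.log (∑ x, q x) ≤ 0 :=
    Real.log_nonpos (Finset.sum_nonneg (fun x _ => hq x)) hq1
  linarith


section Aux

variable {W Z : Type*} [Fintype W] [Fintype Z] {n m : ℕ}

lemma iid_pmf (pZ : Z → ℝ) (hpZ : IsPMF pZ) : IsPMF (iid m pZ) := by
  constructor
  · intro dt; exact Finset.prod_nonneg (fun i _ => hpZ.1 _)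
  · have : ∑ dt : Fin m → Z, iid m pZ dt = ∏ _i : Fin m, ∑ z, pZ z := by
      rw [Fintype.prod_sum]
      rfl
    rw [this, hpZ.2]
    simp

lemma iid_marg (pZ : Z → ℝ) (hpZ : IsPMF pZ) (j : Fin m) (g : Z → ℝ) :
    ∑ dt, iid m pZ dt * g (dt j) = ∑ z, pZ z * g z := by
  classical
  have key : ∀ dt : Fin m → Z, iid m pZ dt * g (dt j)
      = ∏ i, (if i = j then pZ (dt i) * g (dt i) else pZ (dt i)) := by
    intro dt
    rw [iid, ← Finset.mul_prod_erase Finset.univ _ (Finset.mem_univ j),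
        ← Finset.mul_prod_erase Finset.univ (fun i => if i = j then pZ (dt i) * g (dt i) else pZ (dt i)) (Finset.mem_univ j)]
    rw [Finset.prod_congr rfl (fun i hi => if_neg (Finset.ne_of_mem_erase hi))]
    simp only [eq_self_iff_true, if_true]
    ring
  simp_rw [key]
  rw [← Fintype.prod_sum (fun i z => if i = j then pZ z * g z else pZ z)]
  rw [Finset.prod_eq_single j]
  · simp
  · intro i _ hij
    simp only [if_neg hij]
    exact hpZ.2
  · intro h; exact absurd (Finset.mem_univ j) h

/-- the full joint. -/
def nu (pS : (Fin n → Z) → ℝ) (pZ : Z → ℝ) (P : (Fin n → Z) → (Fin m → Z) → W → ℝ)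
    (ds : Fin n → Z) (dt : Fin m → Z) (w : W) : ℝ := pS ds * iid m pZ dt * P ds dt w

def Mds (pZ : Z → ℝ) (P : (Fin n → Z) → (Fin m → Z) → W → ℝ)
    (ds : Fin n → Z) (w : W) : ℝ := ∑ dt, iid m pZ dt * P ds dt w

open Classical in
/-- joint of (W, Z_j). -/
def piJ (pS : (Fin n → Z) → ℝ) (pZ : Z → ℝ) (P : (Fin n → Z) → (Fin m → Z) → W → ℝ)
    (j : Fin m) (w : W) (z : Z) : ℝ :=
  ∑ ds, ∑ dt, if dt j = z then nu pS pZ P ds dt w else 0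

lemma piJ_swap (pS : (Fin n → Z) → ℝ) (pZ : Z → ℝ) (P : (Fin n → Z) → (Fin m → Z) → W → ℝ)
    (j : Fin m) (g : W → Z → ℝ) :
    ∑ w, ∑ z, piJ pS pZ P j w z * g w z
      = ∑ ds, ∑ dt, ∑ w, nu pS pZ P ds dt w * g w (dt j) := by
  classical
  unfold piJ
  simp only [Finset.sum_mul, ite_mul, zero_mul]
  have h1 : ∀ w : W, (∑ z, ∑ ds, ∑ dt, if dt j = z then nu pS pZ P ds dt w * g w z else 0)
      = ∑ ds, ∑ dt, ∑ z, if dt j = z then nu pS pZ P ds dt w * g w z else 0 := by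
    intro w
    rw [Finset.sum_comm]
    exact Finset.sum_congr rfl fun ds _ => Finset.sum_comm
  simp_rw [h1, Finset.sum_ite_eq, Finset.mem_univ, if_true]
  rw [Finset.sum_comm]
  exact Finset.sum_congr rfl fun ds _ => Finset.sum_comm

lemma piJ_marg (pS : (Fin n → Z) → ℝ) (pZ : Z → ℝ) (P : (Fin n → Z) → (Fin m → Z) → W → ℝ)
    (j : Fin m) (w : W) :
    ∑ z, piJ pS pZ P j w z = margW pS (iid m pZ) P w := by
  classical
  unfold piJ margW
  rw [Finset.sum_comm]
  refine Finset.sum_congr rfl fun ds _ => ?_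
  rw [Finset.sum_comm]
  refine Finset.sum_congr rfl fun dt _ => ?_
  simp_rw [Finset.sum_ite_eq, Finset.mem_univ, if_true]
  simp [nu]


section Facts
variable (pS : (Fin n → Z) → ℝ) (pZ : Z → ℝ) (P : (Fin n → Z) → (Fin m → Z) → W → ℝ)

lemma nu_nonneg (hpS : ∀ ds, 0 ≤ pS ds) (hpZ : ∀ z, 0 ≤ pZ z) (hPn : ∀ ds dt w, 0 ≤ P ds dt w)
    (ds : Fin n → Z) (dt : Fin m → Z) (w : W) : 0 ≤ nu pS pZ P ds dt w :=
  mul_nonneg (mul_nonneg (hpS ds) (Finset.prod_nonneg fun i _ => hpZ _)) (hPn ds dt w)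

lemma iid_nonneg (hpZ : ∀ z, 0 ≤ pZ z) (dt : Fin m → Z) : 0 ≤ iid m pZ dt :=
  Finset.prod_nonneg fun i _ => hpZ _

lemma Mds_nonneg (hpZ : ∀ z, 0 ≤ pZ z) (hPn : ∀ ds dt w, 0 ≤ P ds dt w) (ds : Fin n → Z) (w : W) :
    0 ≤ Mds pZ P ds w :=
  Finset.sum_nonneg fun dt _ => mul_nonneg (iid_nonneg pZ hpZ dt) (hPn ds dt w)

lemma margW_nonneg (hpS : ∀ ds, 0 ≤ pS ds) (hpZ : ∀ z, 0 ≤ pZ z)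
    (hPn : ∀ ds dt w, 0 ≤ P ds dt w) (w : W) : 0 ≤ margW pS (iid m pZ) P w :=
  Finset.sum_nonneg fun ds _ => Finset.sum_nonneg fun dt _ => nu_nonneg pS pZ P hpS hpZ hPn ds dt w

lemma piJ_nonneg (hpS : ∀ ds, 0 ≤ pS ds) (hpZ : ∀ z, 0 ≤ pZ z)
    (hPn : ∀ ds dt w, 0 ≤ P ds dt w) (j : Fin m) (w : W) (z : Z) : 0 ≤ piJ pS pZ P j w z := by
  refine Finset.sum_nonneg fun ds _ => Finset.sum_nonneg fun dt _ => ?_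
  split_ifs
  · exact nu_nonneg pS pZ P hpS hpZ hPn ds dt w
  · exact le_rfl

lemma nu_fac_pos (hpS : ∀ ds, 0 ≤ pS ds) (hpZ : ∀ z, 0 ≤ pZ z) (hPn : ∀ ds dt w, 0 ≤ P ds dt w)
    {ds : Fin n → Z} {dt : Fin m → Z} {w : W} (h : 0 < nu pS pZ P ds dt w) :
    0 < pS ds ∧ 0 < iid m pZ dt ∧ 0 < P ds dt w := by
  unfold nu at h
  refine ⟨?_, ?_, ?_⟩
  · rcases (hpS ds).lt_or_eq with h' | h'
    · exact h'
    · exfalso; rw [← h'] at h; simp at h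
  · rcases (iid_nonneg pZ hpZ dt).lt_or_eq with h' | h'
    · exact h'
    · exfalso; rw [← h'] at h; simp at h
  · rcases (hPn ds dt w).lt_or_eq with h' | h'
    · exact h'
    · exfalso; rw [← h'] at h; simp at h

lemma Mds_ge (hpZ : ∀ z, 0 ≤ pZ z) (hPn : ∀ ds dt w, 0 ≤ P ds dt w)
    (ds : Fin n → Z) (dt : Fin m → Z) (w : W) :
    iid m pZ dt * P ds dt w ≤ Mds pZ P ds w :=
  Finset.single_le_sum (f := fun dt' => iid m pZ dt' * P ds dt' w)
    (fun dt' _ => mul_nonneg (iid_nonneg pZ hpZ dt') (hPn ds dt' w)) (Finset.mem_univ dt)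

lemma margW_ge (hpS : ∀ ds, 0 ≤ pS ds) (hpZ : ∀ z, 0 ≤ pZ z) (hPn : ∀ ds dt w, 0 ≤ P ds dt w)
    (ds : Fin n → Z) (dt : Fin m → Z) (w : W) :
    nu pS pZ P ds dt w ≤ margW pS (iid m pZ) P w := by
  have h1 : nu pS pZ P ds dt w ≤ ∑ dt', nu pS pZ P ds dt' w :=
    Finset.single_le_sum (f := fun dt' => nu pS pZ P ds dt' w)
      (fun dt' _ => nu_nonneg pS pZ P hpS hpZ hPn ds dt' w) (Finset.mem_univ dt)
  have h2 : (∑ dt', nu pS pZ P ds dt' w) ≤ ∑ ds', ∑ dt', nu pS pZ P ds' dt' w :=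
    Finset.single_le_sum (f := fun ds' => ∑ dt', nu pS pZ P ds' dt' w)
      (fun ds' _ => Finset.sum_nonneg fun dt' _ => nu_nonneg pS pZ P hpS hpZ hPn ds' dt' w)
      (Finset.mem_univ ds)
  exact le_trans h1 h2

open Classical in
lemma piJ_ge (hpS : ∀ ds, 0 ≤ pS ds) (hpZ : ∀ z, 0 ≤ pZ z) (hPn : ∀ ds dt w, 0 ≤ P ds dt w)
    (j : Fin m) (ds : Fin n → Z) (dt : Fin m → Z) (w : W) :
    nu pS pZ P ds dt w ≤ piJ pS pZ P j w (dt j) := by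
  have hnn : ∀ ds' dt', (0:ℝ) ≤ if dt' j = dt j then nu pS pZ P ds' dt' w else 0 := by
    intro ds' dt'; split_ifs
    · exact nu_nonneg pS pZ P hpS hpZ hPn ds' dt' w
    · exact le_rfl
  have h1 : nu pS pZ P ds dt w ≤ ∑ dt', if dt' j = dt j then nu pS pZ P ds dt' w else 0 := by
    have := Finset.single_le_sum (f := fun dt' => if dt' j = dt j then nu pS pZ P ds dt' w else 0)
      (fun dt' _ => hnn ds dt') (Finset.mem_univ dt)
    simpa using this
  have h2 : (∑ dt', if dt' j = dt j then nu pS pZ P ds dt' w else 0) ≤ piJ pS pZ P j w (dt j) :=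
    Finset.single_le_sum (f := fun ds' => ∑ dt', if dt' j = dt j then nu pS pZ P ds' dt' w else 0)
      (fun ds' _ => Finset.sum_nonneg fun dt' _ => hnn ds' dt') (Finset.mem_univ ds)
  exact le_trans h1 h2

lemma sum_P_over_w (hP : ∀ ds dt, IsPMF (P ds dt)) (ds : Fin n → Z) (dt : Fin m → Z) :
    ∑ w, P ds dt w = 1 := (hP ds dt).2

lemma sum_Mds (hpZ : IsPMF pZ) (hP : ∀ ds dt, IsPMF (P ds dt)) (ds : Fin n → Z) :
    ∑ w, Mds pZ P ds w = 1 := by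
  unfold Mds
  rw [Finset.sum_comm]
  have : ∀ dt, ∑ w, iid m pZ dt * P ds dt w = iid m pZ dt := by
    intro dt
    rw [← Finset.mul_sum, (hP ds dt).2, mul_one]
  rw [Finset.sum_congr rfl fun dt _ => this dt]
  exact (iid_pmf pZ hpZ).2

lemma sum_nu (hpS : IsPMF pS) (hpZ : IsPMF pZ) (hP : ∀ ds dt, IsPMF (P ds dt)) :
    ∑ ds, ∑ dt, ∑ w, nu pS pZ P ds dt w = 1 := by
  have h1 : ∀ ds dt, ∑ w, nu pS pZ P ds dt w = pS ds * iid m pZ dt := by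
    intro ds dt; unfold nu; rw [← Finset.mul_sum, (hP ds dt).2, mul_one]
  simp_rw [h1]
  have h2 : ∀ ds, ∑ dt, pS ds * iid m pZ dt = pS ds := by
    intro ds; rw [← Finset.mul_sum, (iid_pmf pZ hpZ).2, mul_one]
  simp_rw [h2]
  exact hpS.2

lemma margW_pmf (hpS : IsPMF pS) (hpZ : IsPMF pZ) (hP : ∀ ds dt, IsPMF (P ds dt)) :
    IsPMF (margW pS (iid m pZ) P) := by
  constructor
  · exact margW_nonneg pS pZ P hpS.1 hpZ.1 (fun ds dt w => (hP ds dt).1 w)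
  · unfold margW
    rw [Finset.sum_comm]
    have : ∀ ds, ∑ w, ∑ dt, pS ds * iid m pZ dt * P ds dt w
        = ∑ dt, ∑ w, pS ds * iid m pZ dt * P ds dt w := fun ds => Finset.sum_comm
    rw [Finset.sum_congr rfl fun ds _ => this ds]
    exact sum_nu pS pZ P hpS hpZ hP


end Facts

lemma pointwiseA (a b c M0 : ℝ) (ha : 0 ≤ a) (hb : 0 ≤ b) (hc : 0 ≤ c) :
    a * ((b * c) * Real.log ((b * c) / (M0 * b))) =
      (a * b * c) * Real.log ((a * b * c) / (a * b * M0)) := by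
  rcases eq_or_lt_of_le ha with h | h
  · simp [← h]
  rcases eq_or_lt_of_le hb with h2 | h2
  · simp [← h2]
  rcases eq_or_lt_of_le hc with h3 | h3
  · simp [← h3]
  have harg : (a * b * c) / (a * b * M0) = (b * c) / (M0 * b) := by
    rw [mul_assoc a b c, mul_assoc a b M0, mul_div_mul_left _ _ h.ne', mul_comm M0 b]
  rw [harg]; ring

/-- Step A : condMI as a full-joint KL. -/
lemma stepA (pS : (Fin n → Z) → ℝ) (hpS : ∀ ds, 0 ≤ pS ds)
    (pZ : Z → ℝ) (P : (Fin n → Z) → (Fin m → Z) → W → ℝ)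
    (hT : ∀ dt, 0 ≤ iid m pZ dt) (hPn : ∀ ds dt w, 0 ≤ P ds dt w) :
    condMI pS (iid m pZ) P = ∑ ds, ∑ dt, ∑ w, nu pS pZ P ds dt w *
      Real.log (nu pS pZ P ds dt w / (pS ds * iid m pZ dt * Mds pZ P ds w)) := by
  unfold condMI KL
  refine Finset.sum_congr rfl fun ds _ => ?_
  rw [Fintype.sum_prod_type]
  simp only [Finset.mul_sum]
  rw [Finset.sum_comm]
  refine Finset.sum_congr rfl fun dt _ => ?_
  refine Finset.sum_congr rfl fun w _ => ?_
  exact pointwiseA (pS ds) (iid m pZ dt) (P ds dt w) (Mds pZ P ds w)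
    (hpS ds) (hT dt) (hPn ds dt w)

open Classical in
lemma superadd (hm : 0 < m)
    (pS : (Fin n → Z) → ℝ) (hpS : IsPMF pS)
    (pZ : Z → ℝ) (hpZ : IsPMF pZ)
    (P : (Fin n → Z) → (Fin m → Z) → W → ℝ) (hP : ∀ ds dt, IsPMF (P ds dt)) :
    ∑ j : Fin m, (∑ w, ∑ z, piJ pS pZ P j w z *
        Real.log (piJ pS pZ P j w z / (margW pS (iid m pZ) P w * pZ z)))
      ≤ condMI pS (iid m pZ) P := by
  have hpSn := hpS.1
  have hpZn := hpZ.1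
  have hPn : ∀ ds dt w, 0 ≤ P ds dt w := fun ds dt w => (hP ds dt).1 w
  set MW := margW pS (iid m pZ) P with hMW
  set ss : (Fin n → Z) → (Fin m → Z) → W → ℝ := fun ds dt w =>
    pS ds * Mds pZ P ds w * ∏ j, (piJ pS pZ P j w (dt j) / MW w) with hss
  -- rewrite LHS
  have hLHS : ∑ j : Fin m, (∑ w, ∑ z, piJ pS pZ P j w z *
        Real.log (piJ pS pZ P j w z / (MW w * pZ z)))
      = ∑ ds, ∑ dt, ∑ w, ∑ j, nu pS pZ P ds dt w *
          Real.log (piJ pS pZ P j w (dt j) / (MW w * pZ (dt j))) := by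
    rw [Finset.sum_congr rfl fun j _ => piJ_swap pS pZ P j
      (fun w z => Real.log (piJ pS pZ P j w z / (MW w * pZ z)))]
    rw [Finset.sum_comm]
    refine Finset.sum_congr rfl fun ds _ => ?_
    rw [Finset.sum_comm]
    refine Finset.sum_congr rfl fun dt _ => ?_
    rw [Finset.sum_comm]
  rw [hLHS, stepA pS hpSn pZ P (iid_nonneg pZ hpZn) hPn]
  -- reduce to nonnegativity of a KL-type sum
  have key : ∀ ds dt w, nu pS pZ P ds dt w *
        Real.log (nu pS pZ P ds dt w / (pS ds * iid m pZ dt * Mds pZ P ds w))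
      - ∑ j, nu pS pZ P ds dt w *
          Real.log (piJ pS pZ P j w (dt j) / (MW w * pZ (dt j)))
      = nu pS pZ P ds dt w * Real.log (nu pS pZ P ds dt w / ss ds dt w) := by
    intro ds dt w
    rcases (nu_nonneg pS pZ P hpSn hpZn hPn ds dt w).lt_or_eq with hν | hν
    swap
    · simp [← hν]
    -- positivity facts
    obtain ⟨h1, h2, h3⟩ := nu_fac_pos pS pZ P hpSn hpZn hPn hν
    have hZj : ∀ j, 0 < pZ (dt j) := by
      intro j
      have hne : pZ (dt j) ≠ 0 := by
        intro h0
        have : iid m pZ dt = 0 := Finset.prod_eq_zero (Finset.mem_univ j) h0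
        rw [this] at h2; exact lt_irrefl 0 h2
      exact lt_of_le_of_ne (hpZn _) (Ne.symm hne)
    have hM : 0 < Mds pZ P ds w :=
      lt_of_lt_of_le (mul_pos h2 h3) (Mds_ge pZ P hpZn hPn ds dt w)
    have hMWp : 0 < MW w := lt_of_lt_of_le hν (margW_ge pS pZ P hpSn hpZn hPn ds dt w)
    have hpiJ : ∀ j, 0 < piJ pS pZ P j w (dt j) :=
      fun j => lt_of_lt_of_le hν (piJ_ge pS pZ P hpSn hpZn hPn j ds dt w)
    have hssp : 0 < ss ds dt w := by
      refine mul_pos (mul_pos h1 hM) (Finset.prod_pos fun j _ => div_pos (hpiJ j) hMWp)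
    -- log expansions
    have e1 : Real.log (nu pS pZ P ds dt w / (pS ds * iid m pZ dt * Mds pZ P ds w))
        = Real.log (nu pS pZ P ds dt w)
          - (Real.log (pS ds) + (∑ j, Real.log (pZ (dt j))) + Real.log (Mds pZ P ds w)) := by
      rw [Real.log_div hν.ne' (by positivity),
          Real.log_mul (by positivity) hM.ne', Real.log_mul h1.ne' h2.ne']
      rw [show Real.log (iid m pZ dt) = ∑ j, Real.log (pZ (dt j)) from by
        unfold iid; exact Real.log_prod (fun j _ => (hZj j).ne')]
    have e2 : ∀ j, Real.log (piJ pS pZ P j w (dt j) / (MW w * pZ (dt j)))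
        = Real.log (piJ pS pZ P j w (dt j)) - Real.log (MW w) - Real.log (pZ (dt j)) := by
      intro j
      rw [Real.log_div (hpiJ j).ne' (mul_pos hMWp (hZj j)).ne', Real.log_mul hMWp.ne' (hZj j).ne']
      ring
    have e3 : Real.log (nu pS pZ P ds dt w / ss ds dt w)
        = Real.log (nu pS pZ P ds dt w)
          - (Real.log (pS ds) + Real.log (Mds pZ P ds w)
             + ∑ j, (Real.log (piJ pS pZ P j w (dt j)) - Real.log (MW w))) := by
      rw [Real.log_div hν.ne' hssp.ne']
      rw [hss]
      simp only []
      rw [Real.log_mul (by positivity) (Finset.prod_pos fun j _ => div_pos (hpiJ j) hMWp).ne',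
          Real.log_mul h1.ne' hM.ne']
      rw [show Real.log (∏ j, (piJ pS pZ P j w (dt j) / MW w))
            = ∑ j, (Real.log (piJ pS pZ P j w (dt j)) - Real.log (MW w)) from by
        rw [Real.log_prod (fun j _ => (div_pos (hpiJ j) hMWp).ne')]
        exact Finset.sum_congr rfl fun j _ => Real.log_div (hpiJ j).ne' hMWp.ne']
    rw [e1, e3, Finset.sum_congr rfl fun j _ => congrArg _ (e2 j)]
    rw [← Finset.mul_sum, ← mul_sub]
    congr 1
    rw [Finset.sum_sub_distrib, Finset.sum_sub_distrib]
    ring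
  -- assemble: condMI - LHS = KL(nu, ss) ≥ 0
  have keysum : (∑ ds, ∑ dt, ∑ w, nu pS pZ P ds dt w *
        Real.log (nu pS pZ P ds dt w / (pS ds * iid m pZ dt * Mds pZ P ds w)))
      - (∑ ds, ∑ dt, ∑ w, ∑ j, nu pS pZ P ds dt w *
          Real.log (piJ pS pZ P j w (dt j) / (MW w * pZ (dt j))))
      = ∑ ds, ∑ dt, ∑ w, nu pS pZ P ds dt w * Real.log (nu pS pZ P ds dt w / ss ds dt w) := by
    rw [← Finset.sum_sub_distrib]
    refine Finset.sum_congr rfl fun ds _ => ?_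
    rw [← Finset.sum_sub_distrib]
    refine Finset.sum_congr rfl fun dt _ => ?_
    rw [← Finset.sum_sub_distrib]
    exact Finset.sum_congr rfl fun w _ => key ds dt w
  have hconv : ∀ f : (Fin n → Z) → (Fin m → Z) → W → ℝ,
      ∑ x : (Fin n → Z) × ((Fin m → Z) × W), f x.1 x.2.1 x.2.2 = ∑ ds, ∑ dt, ∑ w, f ds dt w := by
    intro f
    rw [Fintype.sum_prod_type]
    exact Finset.sum_congr rfl fun ds _ => Fintype.sum_prod_type _
  have hssn : ∀ ds dt w, 0 ≤ ss ds dt w := by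
    intro ds dt w
    refine mul_nonneg (mul_nonneg (hpSn ds) (Mds_nonneg pZ P hpZn hPn ds w))
      (Finset.prod_nonneg fun j _ => div_nonneg (piJ_nonneg pS pZ P hpSn hpZn hPn j w (dt j))
        (margW_nonneg pS pZ P hpSn hpZn hPn w))
  have hsspos : ∀ ds dt w, 0 < nu pS pZ P ds dt w → 0 < ss ds dt w := by
    intro ds dt w hν
    obtain ⟨h1, h2, h3⟩ := nu_fac_pos pS pZ P hpSn hpZn hPn hν
    have hM : 0 < Mds pZ P ds w :=
      lt_of_lt_of_le (mul_pos h2 h3) (Mds_ge pZ P hpZn hPn ds dt w)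
    have hMWp : 0 < MW w := lt_of_lt_of_le hν (margW_ge pS pZ P hpSn hpZn hPn ds dt w)
    have hpiJ : ∀ j, 0 < piJ pS pZ P j w (dt j) :=
      fun j => lt_of_lt_of_le hν (piJ_ge pS pZ P hpSn hpZn hPn j ds dt w)
    exact mul_pos (mul_pos h1 hM) (Finset.prod_pos fun j _ => div_pos (hpiJ j) hMWp)
  have hsum_ss : ∑ ds, ∑ dt, ∑ w, ss ds dt w ≤ 1 := by
    have hDT : ∀ ds w, ∑ dt, ss ds dt w
        = pS ds * Mds pZ P ds w * ((MW w / MW w) ^ m) := by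
      intro ds w
      rw [hss]
      simp only []
      rw [← Finset.mul_sum]
      congr 1
      rw [← Fintype.prod_sum (fun j z => piJ pS pZ P j w z / MW w)]
      rw [Finset.prod_congr rfl (fun j (_ : j ∈ Finset.univ) => by
        rw [← Finset.sum_div, piJ_marg pS pZ P j w])]
      rw [Finset.prod_const, Finset.card_univ, Fintype.card_fin]
    have hd : ∀ w : W, (MW w / MW w : ℝ) ^ m ≤ 1 := by
      intro w
      by_cases h : MW w = 0
      · rw [h, div_zero]
        exact pow_le_one₀ le_rfl zero_le_one
      · rw [div_self h, one_pow]
    calc ∑ ds, ∑ dt, ∑ w, ss ds dt w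
        = ∑ ds, ∑ w, ∑ dt, ss ds dt w := Finset.sum_congr rfl fun ds _ => Finset.sum_comm
      _ = ∑ ds, ∑ w, pS ds * Mds pZ P ds w * ((MW w / MW w) ^ m) :=
          Finset.sum_congr rfl fun ds _ => Finset.sum_congr rfl fun w _ => hDT ds w
      _ ≤ ∑ ds, ∑ w, pS ds * Mds pZ P ds w := by
          refine Finset.sum_le_sum fun ds _ => Finset.sum_le_sum fun w _ => ?_
          calc pS ds * Mds pZ P ds w * ((MW w / MW w) ^ m)
              ≤ pS ds * Mds pZ P ds w * 1 := by
                refine mul_le_mul_of_nonneg_left (hd w)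
                  (mul_nonneg (hpSn ds) (Mds_nonneg pZ P hpZn hPn ds w))
            _ = pS ds * Mds pZ P ds w := mul_one _
      _ = ∑ ds, pS ds := by
          refine Finset.sum_congr rfl fun ds _ => ?_
          rw [← Finset.mul_sum, sum_Mds pZ P hpZ hP ds, mul_one]
      _ = 1 := hpS.2
  have hgibbs : 0 ≤ ∑ ds, ∑ dt, ∑ w, nu pS pZ P ds dt w *
      Real.log (nu pS pZ P ds dt w / ss ds dt w) := by
    have := gibbs (α := (Fin n → Z) × ((Fin m → Z) × W))
      (fun x => nu pS pZ P x.1 x.2.1 x.2.2) (fun x => ss x.1 x.2.1 x.2.2)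
      ⟨fun x => nu_nonneg pS pZ P hpSn hpZn hPn _ _ _, by
        rw [hconv (fun ds dt w => nu pS pZ P ds dt w)]
        exact sum_nu pS pZ P hpS hpZ hP⟩
      (fun x => hssn _ _ _)
      (by rw [hconv (fun ds dt w => ss ds dt w)]; exact hsum_ss)
      (fun x h0 => by
        by_contra hν0
        have hν : 0 < nu pS pZ P x.1 x.2.1 x.2.2 :=
          lt_of_le_of_ne (nu_nonneg pS pZ P hpSn hpZn hPn _ _ _) (Ne.symm hν0)
        exact absurd h0 (hsspos _ _ _ hν).ne')
    rw [hconv (fun ds dt w => nu pS pZ P ds dt w * Real.log (nu pS pZ P ds dt w / ss ds dt w))] at this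
    exact this
  linarith [keysum, hgibbs]

lemma pop_eq (hm : 0 < m) (ℓ : W → Z → ℝ) (pZ : Z → ℝ) (hpZ : IsPMF pZ) (w : W) :
    popRisk ℓ (iid m pZ) w = ∑ z, pZ z * ℓ w z := by
  unfold popRisk empRisk
  have e1 : ∀ dt : Fin m → Z, iid m pZ dt * ((∑ j, ℓ w (dt j)) / m)
      = (∑ j, iid m pZ dt * ℓ w (dt j)) / m := by
    intro dt
    rw [← Finset.mul_sum]
    ring
  simp_rw [e1]
  rw [← Finset.sum_div, Finset.sum_comm]
  have e2 : ∀ j : Fin m, ∑ dt, iid m pZ dt * ℓ w (dt j) = ∑ z, pZ z * ℓ w z :=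
    fun j => iid_marg pZ hpZ j (fun z => ℓ w z)
  rw [Finset.sum_congr rfl fun j _ => e2 j, Finset.sum_const, Finset.card_univ,
    Fintype.card_fin, nsmul_eq_mul]
  have hmne : (m:ℝ) ≠ 0 := by exact_mod_cast hm.ne'
  field_simp


end Aux

lemma le_of_eps (a b : ℝ) (h : ∀ ε : ℝ, 0 < ε → a ≤ b + ε) : a ≤ b := by
  by_contra hc
  push_neg at hc
  have := h ((a - b)/2) (by linarith)
  linarith


theorem gen_upper_bound_subGamma
    {W Z : Type*} [Fintype W] [Fintype Z] {n m : ℕ} (hm : 0 < m)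
    (ℓ : W → Z → ℝ) (hℓ : ∀ w z, 0 ≤ ℓ w z)
    (pS : (Fin n → Z) → ℝ) (hpS : IsPMF pS)
    (pZ : Z → ℝ) (hpZ : IsPMF pZ)
    (P : (Fin n → Z) → (Fin m → Z) → W → ℝ) (hP : ∀ ds dt, IsPMF (P ds dt))
    (σs2 cs : ℝ) (hcs : 0 < cs)
    (hsub : SubGammaLoss ℓ (margW pS (iid m pZ) P) pZ σs2 cs) :
    |gen ℓ pS (iid m pZ) P| ≤
      Real.sqrt (2 * σs2 * (condMI pS (iid m pZ) P / m)) +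
        cs * (condMI pS (iid m pZ) P / m) := by
  classical
  have hpSn := hpS.1
  have hpZn := hpZ.1
  have hPn : ∀ ds dt w, 0 ≤ P ds dt w := fun ds dt w => (hP ds dt).1 w
  have hmne : (m:ℝ) ≠ 0 := by
    exact_mod_cast hm.ne'
  have hmpos : (0:ℝ) < m := by exact_mod_cast hm
  set MW := margW pS (iid m pZ) P with hMWdef
  have hMWpmf : IsPMF MW := margW_pmf pS pZ P hpS hpZ hP
  set muBar := ∑ w, ∑ z, MW w * pZ z * ℓ w z with hmuBar
  have pairconv : ∀ F : W → Z → ℝ, ∑ p : W × Z, F p.1 p.2 = ∑ w, ∑ z, F w z :=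
    fun F => Fintype.sum_prod_type _
  have hpairsum : ∑ p : W × Z, MW p.1 * pZ p.2 = 1 := by
    rw [pairconv (fun w z => MW w * pZ z)]
    have e : ∀ w, ∑ z, MW w * pZ z = MW w := fun w => by rw [← Finset.mul_sum, hpZ.2, mul_one]
    rw [Finset.sum_congr rfl fun w _ => e w]
    exact hMWpmf.2
  have hpiJn : ∀ (j : Fin m) w z, 0 ≤ piJ pS pZ P j w z :=
    fun j w z => piJ_nonneg pS pZ P hpSn hpZn hPn j w z
  have hpiJsum : ∀ j : Fin m, ∑ p : W × Z, piJ pS pZ P j p.1 p.2 = 1 := by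
    intro j
    rw [pairconv (fun w z => piJ pS pZ P j w z),
      Finset.sum_congr rfl fun w _ => piJ_marg pS pZ P j w]
    exact hMWpmf.2
  have hpiJ_le : ∀ (j : Fin m) w z, piJ pS pZ P j w z ≤ MW w := by
    intro j w z
    rw [hMWdef, ← piJ_marg pS pZ P j w]
    exact Finset.single_le_sum (f := fun z' => piJ pS pZ P j w z')
      (fun z' _ => hpiJn j w z') (Finset.mem_univ z)
  have hac : ∀ (j : Fin m) (p : W × Z), MW p.1 * pZ p.2 = 0 → piJ pS pZ P j p.1 p.2 = 0 := by
    intro j p h0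
    rcases mul_eq_zero.mp h0 with h | h
    · have h1 := hpiJ_le j p.1 p.2
      have h2 := hpiJn j p.1 p.2
      rw [h] at h1
      linarith
    · unfold piJ
      refine Finset.sum_eq_zero fun ds _ => Finset.sum_eq_zero fun dt _ => ?_
      split_ifs with hdt
      · have hiid : iid m pZ dt = 0 :=
          Finset.prod_eq_zero (Finset.mem_univ j) (by rw [hdt]; exact h)
        simp [nu, hiid]
      · rfl
  have hcgf : ∀ t : ℝ,
      Real.log (∑ p : W × Z, (MW p.1 * pZ p.2) * Real.exp (t * (muBar - ℓ p.1 p.2)))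
        = cgfLoss ℓ MW pZ (-t) := by
    intro t
    unfold cgfLoss
    rw [← hmuBar]
    congr 1
    rw [pairconv (fun w z => (MW w * pZ z) * Real.exp (t * (muBar - ℓ w z)))]
    refine Finset.sum_congr rfl fun w _ => Finset.sum_congr rfl fun z _ => ?_
    rw [show t * (muBar - ℓ w z) = -t * (ℓ w z - muBar) from by ring]
  -- DV per sample
  have dvj : ∀ (t : ℝ) (j : Fin m),
      (∑ w, ∑ z, piJ pS pZ P j w z * (t * (muBar - ℓ w z)))
        ≤ (∑ w, ∑ z, piJ pS pZ P j w z *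
            Real.log (piJ pS pZ P j w z / (MW w * pZ z)))
          + cgfLoss ℓ MW pZ (-t) := by
    intro t j
    have h := dv (fun p : W × Z => piJ pS pZ P j p.1 p.2) (fun p => MW p.1 * pZ p.2)
      (fun p => t * (muBar - ℓ p.1 p.2)) ⟨fun p => hpiJn j p.1 p.2, hpiJsum j⟩
      (fun p => mul_nonneg (hMWpmf.1 _) (hpZn _)) (hac j)
    rw [hcgf t] at h
    rw [pairconv (fun w z => piJ pS pZ P j w z * (t * (muBar - ℓ w z))),
        pairconv (fun w z => piJ pS pZ P j w z *
          Real.log (piJ pS pZ P j w z / (MW w * pZ z)))] at h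
    exact h
  -- each KL is nonnegative
  have hKLj : ∀ j : Fin m, 0 ≤ ∑ w, ∑ z, piJ pS pZ P j w z *
      Real.log (piJ pS pZ P j w z / (MW w * pZ z)) := by
    intro j
    have h := gibbs (fun p : W × Z => piJ pS pZ P j p.1 p.2) (fun p => MW p.1 * pZ p.2)
      ⟨fun p => hpiJn j p.1 p.2, hpiJsum j⟩
      (fun p => mul_nonneg (hMWpmf.1 _) (hpZn _)) (le_of_eq hpairsum) (hac j)
    rw [pairconv (fun w z => piJ pS pZ P j w z *
      Real.log (piJ pS pZ P j w z / (MW w * pZ z)))] at h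
    exact h
  have hIm : 0 ≤ condMI pS (iid m pZ) P :=
    le_trans (Finset.sum_nonneg fun j _ => hKLj j) (superadd hm pS hpS pZ hpZ P hP)
  -- generalization error decomposition
  have swap3 : ∀ F : (Fin n → Z) → (Fin m → Z) → W → ℝ,
      ∑ ds, ∑ dt, ∑ w, F ds dt w = ∑ w, ∑ ds, ∑ dt, F ds dt w := by
    intro F
    rw [show (∑ ds, ∑ dt, ∑ w, F ds dt w) = ∑ ds, ∑ w, ∑ dt, F ds dt w from
      Finset.sum_congr rfl fun ds _ => Finset.sum_comm]
    exact Finset.sum_comm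
  have hgen : gen ℓ pS (iid m pZ) P
      = muBar - ∑ ds, ∑ dt, ∑ w, nu pS pZ P ds dt w * empRisk ℓ dt w := by
    unfold gen
    have e : ∀ ds dt w, pS ds * iid m pZ dt * P ds dt w *
        (popRisk ℓ (iid m pZ) w - empRisk ℓ dt w)
        = nu pS pZ P ds dt w * popRisk ℓ (iid m pZ) w
          - nu pS pZ P ds dt w * empRisk ℓ dt w := by
      intro ds dt w; unfold nu; ring
    simp_rw [e, Finset.sum_sub_distrib]
    congr 1
    simp_rw [pop_eq hm ℓ pZ hpZ]
    rw [swap3 (fun ds dt w => nu pS pZ P ds dt w * (∑ z, pZ z * ℓ w z))]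
    rw [hmuBar]
    refine Finset.sum_congr rfl fun w _ => ?_
    rw [show (∑ z, MW w * pZ z * ℓ w z) = MW w * ∑ z, pZ z * ℓ w z from by
      rw [Finset.mul_sum]; exact Finset.sum_congr rfl fun z _ => by ring]
    rw [hMWdef]
    unfold margW nu
    rw [Finset.sum_mul]
    refine Finset.sum_congr rfl fun ds _ => ?_
    rw [Finset.sum_mul]
  -- total LHS of the summed DV inequalities
  have hLHStotal : ∀ t : ℝ,
      ∑ j : Fin m, (∑ w, ∑ z, piJ pS pZ P j w z * (t * (muBar - ℓ w z)))
        = t * ((m:ℝ) * gen ℓ pS (iid m pZ) P) := by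
    intro t
    rw [Finset.sum_congr rfl fun j (_ : j ∈ Finset.univ) =>
      piJ_swap pS pZ P j (fun w z => t * (muBar - ℓ w z))]
    rw [show (∑ j : Fin m, ∑ ds, ∑ dt, ∑ w,
          nu pS pZ P ds dt w * (t * (muBar - ℓ w (dt j))))
        = ∑ ds, ∑ dt, ∑ w, ∑ j : Fin m,
          nu pS pZ P ds dt w * (t * (muBar - ℓ w (dt j))) from by
      rw [Finset.sum_comm]
      refine Finset.sum_congr rfl fun ds _ => ?_
      rw [Finset.sum_comm]
      refine Finset.sum_congr rfl fun dt _ => ?_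
      rw [Finset.sum_comm]]
    have hpt : ∀ ds dt w, (∑ j : Fin m, nu pS pZ P ds dt w * (t * (muBar - ℓ w (dt j))))
        = t * (m:ℝ) * (nu pS pZ P ds dt w * muBar - nu pS pZ P ds dt w * empRisk ℓ dt w) := by
      intro ds dt w
      rw [← Finset.mul_sum]
      rw [show (∑ j : Fin m, t * (muBar - ℓ w (dt j)))
          = t * ((m:ℝ) * muBar - ∑ j, ℓ w (dt j)) from by
        rw [← Finset.mul_sum]
        congr 1
        rw [Finset.sum_sub_distrib, Finset.sum_const, Finset.card_univ, Fintype.card_fin,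
          nsmul_eq_mul]]
      unfold empRisk
      field_simp
    rw [Finset.sum_congr rfl fun ds _ => Finset.sum_congr rfl fun dt _ =>
      Finset.sum_congr rfl fun w _ => hpt ds dt w]
    have fold : ∀ F : (Fin n → Z) → (Fin m → Z) → W → ℝ,
        ∑ ds, ∑ dt, ∑ w, t * (m:ℝ) * F ds dt w = t * (m:ℝ) * ∑ ds, ∑ dt, ∑ w, F ds dt w := by
      intro F
      simp_rw [Finset.mul_sum]
    rw [fold (fun ds dt w => nu pS pZ P ds dt w * muBar - nu pS pZ P ds dt w * empRisk ℓ dt w)]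
    simp_rw [Finset.sum_sub_distrib]
    rw [show (∑ ds, ∑ dt, ∑ w, nu pS pZ P ds dt w * muBar)
        = (∑ ds, ∑ dt, ∑ w, nu pS pZ P ds dt w) * muBar from by
      simp_rw [Finset.sum_mul]]
    rw [sum_nu pS pZ P hpS hpZ hP, one_mul, hgen]
    ring
  -- headline inequality
  have main : ∀ t : ℝ, t * ((m:ℝ) * gen ℓ pS (iid m pZ) P)
      ≤ condMI pS (iid m pZ) P + (m:ℝ) * cgfLoss ℓ MW pZ (-t) := by
    intro t
    have h1 : ∑ j : Fin m, (∑ w, ∑ z, piJ pS pZ P j w z * (t * (muBar - ℓ w z)))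
        ≤ ∑ j : Fin m, ((∑ w, ∑ z, piJ pS pZ P j w z *
            Real.log (piJ pS pZ P j w z / (MW w * pZ z))) + cgfLoss ℓ MW pZ (-t)) :=
      Finset.sum_le_sum fun j _ => dvj t j
    rw [hLHStotal t, Finset.sum_add_distrib, Finset.sum_const, Finset.card_univ,
      Fintype.card_fin, nsmul_eq_mul] at h1
    have h2 := superadd hm pS hpS pZ hpZ P hP
    linarith
  -- nonnegativity of σs2
  have hσs2 : 0 ≤ σs2 := by
    set lam0 : ℝ := 1 / (2 * cs) with hlam0
    have hlam0pos : 0 < lam0 := by positivity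
    have hcgf0 : 0 ≤ cgfLoss ℓ MW pZ lam0 := by
      have h := dv (fun p : W × Z => MW p.1 * pZ p.2) (fun p => MW p.1 * pZ p.2)
        (fun p => lam0 * (ℓ p.1 p.2 - muBar))
        ⟨fun p => mul_nonneg (hMWpmf.1 _) (hpZn _), hpairsum⟩
        (fun p => mul_nonneg (hMWpmf.1 _) (hpZn _)) (fun p h => h)
      have hz1 : ∑ p : W × Z, (MW p.1 * pZ p.2) * (lam0 * (ℓ p.1 p.2 - muBar)) = 0 := by
        have e : ∀ p : W × Z, (MW p.1 * pZ p.2) * (lam0 * (ℓ p.1 p.2 - muBar))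
            = lam0 * (MW p.1 * pZ p.2 * ℓ p.1 p.2) - lam0 * muBar * (MW p.1 * pZ p.2) := by
          intro p; ring
        rw [Finset.sum_congr rfl fun p _ => e p, Finset.sum_sub_distrib,
          ← Finset.mul_sum, ← Finset.mul_sum, hpairsum,
          pairconv (fun w z => MW w * pZ z * ℓ w z), ← hmuBar]
        ring
      have hz2 : ∑ p : W × Z, (MW p.1 * pZ p.2) *
          Real.log ((MW p.1 * pZ p.2) / (MW p.1 * pZ p.2)) = 0 := by
        refine Finset.sum_eq_zero fun p _ => ?_
        by_cases hp : MW p.1 * pZ p.2 = 0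
        · rw [hp]; ring
        · rw [div_self hp, Real.log_one, mul_zero]
      rw [hz1, hz2, zero_add] at h
      have hfold : Real.log (∑ p : W × Z, (MW p.1 * pZ p.2) *
          Real.exp (lam0 * (ℓ p.1 p.2 - muBar))) = cgfLoss ℓ MW pZ lam0 := by
        unfold cgfLoss
        rw [← hmuBar]
        congr 1
        exact pairconv (fun w z => MW w * pZ z * Real.exp (lam0 * (ℓ w z - muBar)))
      rw [hfold] at h
      exact h
    have habs : |lam0| = lam0 := abs_of_pos hlam0pos
    have hlt : lam0 < 1 / cs := by
      rw [hlam0]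
      exact one_div_lt_one_div_of_lt hcs (by linarith)
    have hb := hsub lam0 (by rw [habs]; exact hlam0pos) (by rw [habs]; exact hlt)
    rw [habs] at hb
    have hden : 1 - cs * lam0 = 1/2 := by
      rw [hlam0]
      field_simp
      ring
    rw [hden] at hb
    norm_num at hb
    by_contra hneg
    push_neg at hneg
    have : lam0 ^ 2 * σs2 < 0 := mul_neg_of_pos_of_neg (pow_pos hlam0pos 2) hneg
    linarith
  -- bound for each admissible lam
  set I := condMI pS (iid m pZ) P with hI
  set A := I / m with hA
  have hA0 : 0 ≤ A := div_nonneg hIm (le_of_lt hmpos)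
  have hdiv : ∀ lam : ℝ, 0 < lam → lam < 1 / cs →
      |gen ℓ pS (iid m pZ) P| ≤ A / lam + lam * σs2 / (2 * (1 - cs * lam)) := by
    intro lam hl1 hl2
    have hden : 0 < 1 - cs * lam := by
      have h := (lt_div_iff₀ hcs).mp hl2
      nlinarith
    have habs : |lam| = lam := abs_of_pos hl1
    have hnegabs : |(-lam)| = lam := by rw [abs_neg, habs]
    have hb1 := hsub (-lam) (by rw [hnegabs]; exact hl1) (by rw [hnegabs]; exact hl2)
    rw [hnegabs] at hb1
    have hb2 := hsub lam (by rw [habs]; exact hl1) (by rw [habs]; exact hl2)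
    rw [habs] at hb2
    have hm1 := main lam
    have hm2 := main (-lam)
    rw [neg_neg] at hm2
    have hRn : (-lam) ^ 2 = lam ^ 2 := by ring
    rw [hRn] at hb1
    set R := lam ^ 2 * σs2 / (2 * (1 - cs * lam)) with hR
    have key1 : lam * ((m:ℝ) * gen ℓ pS (iid m pZ) P) ≤ I + (m:ℝ) * R := by
      calc lam * ((m:ℝ) * gen ℓ pS (iid m pZ) P) ≤ I + (m:ℝ) * cgfLoss ℓ MW pZ (-lam) := hm1
        _ ≤ I + (m:ℝ) * R := by nlinarith [hb1]
    have key2 : -lam * ((m:ℝ) * gen ℓ pS (iid m pZ) P) ≤ I + (m:ℝ) * R := by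
      calc -lam * ((m:ℝ) * gen ℓ pS (iid m pZ) P) ≤ I + (m:ℝ) * cgfLoss ℓ MW pZ lam := hm2
        _ ≤ I + (m:ℝ) * R := by nlinarith [hb2]
    have keyabs : lam * (m:ℝ) * |gen ℓ pS (iid m pZ) P| ≤ I + (m:ℝ) * R := by
      rcases abs_cases (gen ℓ pS (iid m pZ) P) with ⟨he, _⟩ | ⟨he, _⟩
      · rw [he]; nlinarith [key1]
      · rw [he]; nlinarith [key2]
    have hfin : (A / lam + lam * σs2 / (2 * (1 - cs * lam))) * (lam * (m:ℝ)) = I + (m:ℝ) * R := by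
      rw [hR, hA]
      field_simp
    have hthis := keyabs
    rw [← hfin] at hthis
    have hpos : 0 < lam * (m:ℝ) := by positivity
    rw [show lam * (m:ℝ) * |gen ℓ pS (iid m pZ) P|
        = |gen ℓ pS (iid m pZ) P| * (lam * (m:ℝ)) from by ring] at hthis
    exact le_of_mul_le_mul_right hthis hpos
  -- endgame: optimize over lam
  set σ := Real.sqrt σs2 with hσdef
  set B := Real.sqrt (2 * A) with hBdef
  have hσ0 : 0 ≤ σ := Real.sqrt_nonneg _
  have hB0 : 0 ≤ B := Real.sqrt_nonneg _
  have hσ2 : σ ^ 2 = σs2 := Real.sq_sqrt hσs2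
  have hB2 : B ^ 2 = 2 * A := Real.sq_sqrt (by linarith)
  have htarget : Real.sqrt (2 * σs2 * A) = σ * B := by
    rw [show 2 * σs2 * A = σs2 * (2 * A) from by ring, Real.sqrt_mul hσs2]
  rw [htarget]
  clear_value I A σ B
  rcases hA0.eq_or_lt with hAz | hApos
  · -- case A = 0
    refine le_of_eps _ _ fun ε hε => ?_
    set lam := min (1 / (2 * cs)) (ε / (σs2 + 1)) with hlamdef
    have hl1 : 0 < lam := lt_min (by positivity) (by positivity)
    have hl2 : lam < 1 / cs :=
      lt_of_le_of_lt (min_le_left _ _) (one_div_lt_one_div_of_lt hcs (by linarith))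
    have h := hdiv lam hl1 hl2
    rw [← hAz, zero_div, zero_add] at h
    have hcl : cs * lam ≤ 1 / 2 := by
      have h1 : lam ≤ 1 / (2 * cs) := min_le_left _ _
      calc cs * lam ≤ cs * (1 / (2 * cs)) := mul_le_mul_of_nonneg_left h1 hcs.le
        _ = 1 / 2 := by field_simp
    have hd1 : (1:ℝ) ≤ 2 * (1 - cs * lam) := by linarith
    have hterm : lam * σs2 / (2 * (1 - cs * lam)) ≤ lam * σs2 :=
      div_le_self (by positivity) hd1
    have hterm2 : lam * σs2 ≤ ε := by
      have h1 : lam ≤ ε / (σs2 + 1) := min_le_right _ _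
      have h2 : lam * σs2 ≤ (ε / (σs2 + 1)) * σs2 := mul_le_mul_of_nonneg_right h1 hσs2
      have h3 : (ε / (σs2 + 1)) * σs2 ≤ ε := by
        rw [div_mul_eq_mul_div, div_le_iff₀ (by positivity)]
        nlinarith
      linarith
    have hBge : 0 ≤ σ * B + cs * A := by
      rw [← hAz]
      have := mul_nonneg hσ0 hB0
      nlinarith
    linarith
  · -- case 0 < A
    have hB : 0 < B := by rw [hBdef]; exact Real.sqrt_pos.mpr (by linarith)
    refine le_of_eps _ _ fun ε hε => ?_
    set e := 2 * ε / B with hedef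
    have he : 0 < e := by rw [hedef]; positivity
    clear_value e
    set D := σ + e + cs * B with hDdef
    have hcsB : 0 < cs * B := mul_pos hcs hB
    have hD : 0 < D := by rw [hDdef]; linarith
    clear_value D
    have hse : 0 < σ + e := by linarith
    set lam := B / D with hlamdef
    have hl1 : 0 < lam := by rw [hlamdef]; exact div_pos hB hD
    clear_value lam
    have hl2 : lam < 1 / cs := by
      rw [hlamdef, div_lt_div_iff₀ hD hcs]
      rw [hDdef]
      nlinarith
    have h := hdiv lam hl1 hl2
    have h1m : 1 - cs * lam = (σ + e) / D := by
      rw [hlamdef]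
      field_simp
      rw [hDdef]
      ring
    have hA1 : A / lam = B / 2 * (σ + e) + cs * A := by
      rw [hlamdef, div_div_eq_mul_div, div_eq_iff hB.ne']
      rw [hDdef]
      linear_combination (-(σ + e) / 2) * hB2
    have hval : lam * σs2 / (2 * (1 - cs * lam)) = B * σs2 / (2 * (σ + e)) := by
      rw [h1m, hlamdef]
      field_simp
      try ring
    have hb2 : B * σs2 / (2 * (σ + e)) ≤ B * σ / 2 := by
      rw [div_le_div_iff₀ (by linarith) (by norm_num)]
      nlinarith [mul_nonneg (mul_nonneg hB0 hσ0) he.le, hσ2]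
    have hBe : B * e / 2 = ε := by
      rw [hedef]
      field_simp
      try ring
    have hσB : σ * B = B * σ / 2 + B * σ / 2 := by ring
    rw [hA1, hval] at h
    calc |gen ℓ pS (iid m pZ) P| ≤ B / 2 * (σ + e) + cs * A + B * σs2 / (2 * (σ + e)) := h
      _ ≤ B / 2 * (σ + e) + cs * A + B * σ / 2 := by linarith
      _ = σ * B + cs * A + B * e / 2 := by ring
      _ = σ * B + cs * A + ε := by rw [hBe]

end TransferGibbs
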